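/- With the notation C_{p,q} := ∑_{a,b=1}^N x_a^p y_b^q · Y(x_a)X(y_b) / ((x_a−y_b) X'(x_a) Y'(y_b)), one has C_{0,1} = Ĥ(X;Y) and C_{1,0} = −Ĥ(Y;X), where Ĥ(X;Y) = (1/2)(∑_i x_i − ∑_i y_i)^2 − (1/2)(∑_i x_i^2 − ∑_i y_i^2). -/

import Mathlib

open Finset

/-- `C_{p,q} = ∑_{a,b} x_a^p y_b^q · Y(x_a) X(y_b) / ((x_a−y_b) X'(x_a) Y'(y_b))`. -/
noncomputable def Cpq {N : ℕ} (x y : Fin N → ℂ) (p q : ℤ) : ℂ :=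
  ∑ a, ∑ b, x a ^ p * y b ^ q *
    (∏ i, (x a - y i)) * (∏ i, (y b - x i)) /
    ((x a - y b) * (∏ i ∈ Finset.univ.erase a, (x a - x i)) *
      (∏ i ∈ Finset.univ.erase b, (y b - y i)))

/-- `Ĥ(X;Y) = (1/2)(∑ xᵢ − ∑ yᵢ)² − (1/2)(∑ xᵢ² − ∑ yᵢ²)`. -/
noncomputable def Hhat {N : ℕ} (W W' : Fin N → ℂ) : ℂ :=
  (1 / 2) * ((∑ i, W i) - ∑ i, W' i) ^ 2 - (1 / 2) * ((∑ i, (W i) ^ 2) - ∑ i, (W' i) ^ 2)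

namespace Stmt3Aux

open Polynomial Lagrange

/-- Sum over size-2 subsets. -/
lemma two_mul_esymm2 {ι : Type*} [DecidableEq ι] (s : Finset ι) (v : ι → ℂ) :
    2 * ∑ t ∈ s.powersetCard 2, ∏ i ∈ t, v i
      = (∑ i ∈ s, v i) ^ 2 - ∑ i ∈ s, (v i) ^ 2 := by
  induction s using Finset.induction_on with
  | empty =>
    have h0 : (∅ : Finset ι).powersetCard 2 = ∅ := Finset.powersetCard_eq_empty.mpr (by simp)
    simp [h0]
  | @insert a s ha ih =>
    have hdisj : Disjoint (s.powersetCard 2) ((s.powersetCard 1).image (insert a)) := by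
      rw [Finset.disjoint_left]
      intro t ht ht2
      obtain ⟨u, hu, rfl⟩ := Finset.mem_image.mp ht2
      exact ha ((Finset.mem_powersetCard.mp ht).1 (Finset.mem_insert_self a u))
    have hinj : ∀ u ∈ s.powersetCard 1, ∀ u' ∈ s.powersetCard 1,
        insert a u = insert a u' → u = u' := by
      intro u hu u' hu' h
      have hau : a ∉ u := fun h' => ha ((Finset.mem_powersetCard.mp hu).1 h')
      have hau' : a ∉ u' := fun h' => ha ((Finset.mem_powersetCard.mp hu').1 h')
      rw [← Finset.erase_insert hau, ← Finset.erase_insert hau', h]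
    have h1 : ∑ u ∈ s.powersetCard 1, ∏ i ∈ u, v i = ∑ i ∈ s, v i := by
      rw [Finset.powersetCard_one, Finset.sum_map]
      simp
    have h2 : ∑ u ∈ s.powersetCard 1, ∏ i ∈ insert a u, v i
        = v a * ∑ i ∈ s, v i := by
      rw [← h1, Finset.mul_sum]
      refine Finset.sum_congr rfl fun u hu => ?_
      have hau : a ∉ u := fun h' => ha ((Finset.mem_powersetCard.mp hu).1 h')
      rw [Finset.prod_insert hau]
    rw [Finset.powersetCard_succ_insert ha, Finset.sum_union hdisj,
      Finset.sum_image hinj, h2, Finset.sum_insert ha, Finset.sum_insert ha]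
    linear_combination ih

lemma esymm_one' {N : ℕ} (v : Fin N → ℂ) :
    ((univ : Finset (Fin N)).val.map v).esymm 1 = ∑ i, v i := by
  rw [Multiset.esymm, Multiset.powersetCard_one, Multiset.map_map, Multiset.map_map]
  simp [Finset.sum]

lemma esymm_two' {N : ℕ} (v : Fin N → ℂ) :
    2 * ((univ : Finset (Fin N)).val.map v).esymm 2
      = (∑ i, v i) ^ 2 - ∑ i, (v i) ^ 2 := by
  rw [Finset.esymm_map_val]
  exact two_mul_esymm2 univ v

lemma nodal_coeff {N : ℕ} (v : Fin N → ℂ) (k : ℕ) (h : k ≤ N) :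
    (nodal univ v).coeff k
      = (-1) ^ (N - k) * (((univ : Finset (Fin N)).val.map v).esymm (N - k)) := by
  have hn : nodal univ v = (((univ : Finset (Fin N)).val.map v).map (fun t => X - C t)).prod := by
    rw [nodal, Finset.prod, Multiset.map_map]
    rfl
  have hcard : Multiset.card ((univ : Finset (Fin N)).val.map v) = N := by simp
  rw [hn, Multiset.prod_X_sub_C_coeff _ (by rw [hcard]; exact h), hcard]

lemma nodal_coeff_high {N : ℕ} (v : Fin N → ℂ) (m : ℕ) (hm : N ≤ m) :
    (nodal univ v).coeff m = if m = N then 1 else 0 := by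
  rcases eq_or_lt_of_le hm with h | h
  · subst h
    rw [if_pos rfl]
    have h1 := (nodal_monic (s := (univ : Finset (Fin N))) (v := v)).coeff_natDegree
    rwa [natDegree_nodal, Finset.card_univ, Fintype.card_fin] at h1
  · rw [if_neg (by omega)]
    exact coeff_eq_zero_of_natDegree_lt (by simp [natDegree_nodal]; omega)

/-- Barycentric evaluation of a low-degree polynomial. -/
lemma L1 {N : ℕ} (v : Fin N → ℂ) (hv : Function.Injective v) (P : ℂ[X])
    (hP : P.degree < (N : ℕ)) {z : ℂ} (hz : ∀ i, z ≠ v i) :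
    ∑ i, nodalWeight univ v i * (z - v i)⁻¹ * P.eval (v i)
      = P.eval z / (nodal univ v).eval z := by
  have hz' : ∀ i ∈ (univ : Finset (Fin N)), z ≠ v i := fun i _ => hz i
  have hnz : (nodal univ v).eval z ≠ 0 := eval_nodal_not_at_node hz'
  have hd : P.degree < ((univ : Finset (Fin N)).card : WithBot ℕ) := by simpa using hP
  have h := Lagrange.eq_interpolate (s := univ) (v := v) hv.injOn hd
  conv_rhs => rw [h, eval_interpolate_not_at_node _ hz']
  rw [mul_comm, mul_div_assoc, div_self hnz, mul_one]

/-- Sum of weighted values gives the top coefficient. -/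
lemma L2 {n : ℕ} (v : Fin (n + 1) → ℂ) (hv : Function.Injective v) (P : ℂ[X])
    (hP : P.degree < ((n + 1 : ℕ) : WithBot ℕ)) :
    ∑ i, nodalWeight univ v i * P.eval (v i) = P.coeff n := by
  obtain ⟨z, hz0⟩ := Infinite.exists_notMem_finset (univ.image v)
  have hz : ∀ i, z ≠ v i := by
    intro i h
    exact hz0 (Finset.mem_image.mpr ⟨i, Finset.mem_univ i, h.symm⟩)
  set Q : ℂ[X] := X * P - C (P.coeff n) * nodal univ v with hQ
  have hQd : Q.degree < ((n + 1 : ℕ) : WithBot ℕ) := by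
    rw [degree_lt_iff_coeff_zero]
    intro m hm
    obtain ⟨j, rfl⟩ := Nat.exists_eq_add_of_le hm
    cases j with
    | zero =>
      rw [Nat.add_zero, hQ, coeff_sub, coeff_C_mul, coeff_X_mul,
        nodal_coeff_high v _ le_rfl, if_pos rfl]
      ring
    | succ j' =>
      rw [hQ, coeff_sub, coeff_C_mul, show n + 1 + (j' + 1) = (n + (j' + 1)) + 1 by ring,
        coeff_X_mul]
      have h1 : P.coeff (n + (j' + 1)) = 0 := by
        apply coeff_eq_zero_of_degree_lt
        refine lt_of_lt_of_le hP ?_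
        exact_mod_cast (show n + 1 ≤ n + (j' + 1) by omega)
      rw [h1, nodal_coeff_high v _ (by omega), if_neg (by omega)]
      ring
  have evQ : ∀ i, Q.eval (v i) = v i * P.eval (v i) := by
    intro i
    simp [hQ, eval_nodal_at_node (Finset.mem_univ i)]
  have key : ∀ i, nodalWeight univ v i * P.eval (v i)
      = z * (nodalWeight univ v i * (z - v i)⁻¹ * P.eval (v i))
        - nodalWeight univ v i * (z - v i)⁻¹ * Q.eval (v i) := by
    intro i
    rw [evQ i]
    have h0 : z - v i ≠ 0 := sub_ne_zero.mpr (hz i)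
    field_simp
  rw [Finset.sum_congr rfl (fun i _ => key i), Finset.sum_sub_distrib, ← Finset.mul_sum,
    L1 v hv P (by simpa using hP) hz, L1 v hv Q (by simpa using hQd) hz]
  have hnz : (nodal univ v).eval z ≠ 0 :=
    eval_nodal_not_at_node (fun i _ => hz i)
  have hQz : Q.eval z = z * P.eval z - P.coeff n * (nodal univ v).eval z := by
    simp [hQ]
  rw [hQz]
  field_simp
  ring

lemma C01 (N : ℕ) (x y : Fin N → ℂ)
    (hx : Function.Injective x) (hy : Function.Injective y)
    (hxy : ∀ i j, x i ≠ y j) :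
    Cpq x y 0 1 = Hhat x y := by
  cases N with
  | zero => simp [Cpq, Hhat]
  | succ n =>
    set px : ℂ[X] := nodal univ x with hpx
    set py : ℂ[X] := nodal univ y with hpy
    set c : ℂ := (∑ i, y i) - ∑ i, x i with hc
    set R1 : ℂ[X] := X * (px - py) - C c * py with hR1
    have hpx1 : px.coeff n = -(∑ i, x i) := by
      rw [hpx, nodal_coeff x n (by omega), show n + 1 - n = 1 by omega, esymm_one']
      ring
    have hpy1 : py.coeff n = -(∑ i, y i) := by
      rw [hpy, nodal_coeff y n (by omega), show n + 1 - n = 1 by omega, esymm_one']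
      ring
    have hdeg : R1.degree < ((n + 1 : ℕ) : WithBot ℕ) := by
      rw [degree_lt_iff_coeff_zero]
      intro m hm
      obtain ⟨j, rfl⟩ := Nat.exists_eq_add_of_le hm
      cases j with
      | zero =>
        rw [Nat.add_zero, hR1, coeff_sub, coeff_C_mul, coeff_X_mul, coeff_sub, hpx1, hpy1,
          hpy, nodal_coeff_high y _ le_rfl, if_pos rfl, hc]
        ring
      | succ j' =>
        have e1 : (nodal univ x).coeff (n + (j' + 1)) = (nodal univ y).coeff (n + (j' + 1)) := by
          rw [nodal_coeff_high x _ (by omega), nodal_coeff_high y _ (by omega)]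
        have e2 : (nodal univ y).coeff (n + (j' + 1) + 1) = 0 := by
          rw [nodal_coeff_high y _ (by omega), if_neg (by omega)]
        rw [hR1, coeff_sub, coeff_C_mul,
          show n + 1 + (j' + 1) = (n + (j' + 1)) + 1 by ring, coeff_X_mul, coeff_sub,
          hpx, hpy, e1, e2]
        ring
    have hevR1y : ∀ b, R1.eval (y b) = y b * ∏ i, (y b - x i) := by
      intro b
      rw [hR1]
      simp [hpy, hpx, eval_nodal, eval_nodal_at_node (Finset.mem_univ b)]
    have hevpyx : ∀ a, py.eval (x a) = ∏ i, (x a - y i) := by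
      intro a
      rw [hpy, eval_nodal]
    have hYne : ∀ a, (∏ i, (x a - y i)) ≠ 0 := by
      intro a
      exact Finset.prod_ne_zero_iff.mpr fun i _ => sub_ne_zero.mpr (hxy a i)
    have inner : ∀ a, (∑ b, x a ^ (0 : ℤ) * y b ^ (1 : ℤ) *
        (∏ i, (x a - y i)) * (∏ i, (y b - x i)) /
        ((x a - y b) * (∏ i ∈ Finset.univ.erase a, (x a - x i)) *
          (∏ i ∈ Finset.univ.erase b, (y b - y i))))
        = nodalWeight univ x a * R1.eval (x a) := by
      intro a
      have hz : ∀ i, x a ≠ y i := fun i => hxy a i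
      have hL1 := L1 y hy R1 (by simpa using hdeg) hz
      have step : ∀ b, x a ^ (0 : ℤ) * y b ^ (1 : ℤ) *
          (∏ i, (x a - y i)) * (∏ i, (y b - x i)) /
          ((x a - y b) * (∏ i ∈ Finset.univ.erase a, (x a - x i)) *
            (∏ i ∈ Finset.univ.erase b, (y b - y i)))
          = (∏ i, (x a - y i)) * nodalWeight univ x a *
            (nodalWeight univ y b * (x a - y b)⁻¹ * R1.eval (y b)) := by
        intro b
        rw [hevR1y b, Lagrange.nodalWeight, Lagrange.nodalWeight,
          Finset.prod_inv_distrib, Finset.prod_inv_distrib,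
          zpow_zero, zpow_one, div_eq_mul_inv, mul_inv, mul_inv]
        ring
      rw [Finset.sum_congr rfl (fun b _ => step b), ← Finset.mul_sum, hL1, hevpyx a]
      have hA := hYne a
      field_simp
    have hfinal : Cpq x y 0 1 = R1.coeff n := by
      rw [Cpq, Finset.sum_congr rfl (fun a _ => inner a)]
      exact L2 x hx R1 hdeg
    have hcoeff : R1.coeff n = (X * (px - py)).coeff n + c * (∑ i, y i) := by
      rw [hR1, coeff_sub, coeff_C_mul, hpy1]
      ring
    have hE2x := esymm_two' x
    have hE2y := esymm_two' y
    cases n with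
    | zero =>
      rw [hfinal, hcoeff]
      rw [Polynomial.mul_coeff_zero, coeff_X_zero, zero_mul, zero_add]
      have hx1 : ∑ i : Fin (0 + 1), x i = x 0 := by simp
      have hx2 : ∑ i : Fin (0 + 1), (x i) ^ 2 = x 0 ^ 2 := by simp
      have hy1 : ∑ i : Fin (0 + 1), y i = y 0 := by simp
      have hy2 : ∑ i : Fin (0 + 1), (y i) ^ 2 = y 0 ^ 2 := by simp
      simp only [Hhat, hc, hx1, hx2, hy1, hy2]
      ring
    | succ m =>
      rw [hfinal, hcoeff, coeff_X_mul, coeff_sub]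
      have h2 : 2 * (px.coeff m - py.coeff m)
          = ((∑ i, x i) ^ 2 - ∑ i, (x i) ^ 2) - ((∑ i, y i) ^ 2 - ∑ i, (y i) ^ 2) := by
        rw [hpx, hpy, nodal_coeff x m (by omega), nodal_coeff y m (by omega),
          show m + 1 + 1 - m = 2 by omega]
        simp only [neg_one_sq, one_mul]
        linear_combination esymm_two' x - esymm_two' y
      simp only [Hhat, hc]
      linear_combination h2 / 2
    
lemma Cpq_swap {N : ℕ} (x y : Fin N → ℂ) (p q : ℤ) :
    Cpq x y p q = - Cpq y x q p := by
  have h : Cpq y x q p = ∑ a, ∑ b, -(x a ^ p * y b ^ q *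
      (∏ i, (x a - y i)) * (∏ i, (y b - x i)) /
      ((x a - y b) * (∏ i ∈ Finset.univ.erase a, (x a - x i)) *
        (∏ i ∈ Finset.univ.erase b, (y b - y i)))) := by
    rw [Cpq, Finset.sum_comm]
    refine Finset.sum_congr rfl fun a _ => Finset.sum_congr rfl fun b _ => ?_
    rw [show (y b - x a) * (∏ i ∈ Finset.univ.erase b, (y b - y i)) *
        (∏ i ∈ Finset.univ.erase a, (x a - x i))
        = -((x a - y b) * (∏ i ∈ Finset.univ.erase a, (x a - x i)) *
          (∏ i ∈ Finset.univ.erase b, (y b - y i))) by ring, div_neg]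
    ring
  rw [h]
  simp [Cpq]

end Stmt3Aux

theorem stmt3 (N : ℕ) (x y : Fin N → ℂ)
    (hxinj : Function.Injective x) (hyinj : Function.Injective y)
    (hxy : ∀ i j, x i ≠ y j) :
    Cpq x y 0 1 = Hhat x y ∧ Cpq x y 1 0 = -Hhat y x := by
  constructor
  · exact Stmt3Aux.C01 N x y hxinj hyinj hxy
  · rw [Stmt3Aux.Cpq_swap x y 1 0,
      Stmt3Aux.C01 N y x hyinj hxinj (fun i j => (hxy j i).symm)]
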